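/- Let Ω ⊂ ℝⁿ be a nonempty open bounded set and let u be a solution of the Dirichlet problem (D) which is differentiable at every point of Ω. Let K be the set of maximum points of u on the closure of Ω and let A ⊆ Ω be an open neighborhood of K. Assume ∇u is locally Lipschitz continuous on A ∖ K (i.e., u ∈ C^{1,1}(A ∖ K)). Then for every α > 1/3, u is not of class C^{1,α} on A: there is no constant C > 0 such that |∇u(x) − ∇u(y)| ≤ C|x−y|^α for all x, y ∈ A. -/

import Mathlib

open Set Metric Filter MeasureTheory
open scoped RealInnerProductSpace Topology NNReal

noncomputable section

abbrev Euc (n : ℕ) := EuclideanSpace ℝ (Fin n)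

def infLap {n : ℕ} (φ : Euc n → ℝ) (x : Euc n) : ℝ :=
  ⟪fderiv ℝ (gradient φ) x (gradient φ x), gradient φ x⟫

def IsViscSubsol {n : ℕ} (Ω : Set (Euc n)) (f : Euc n → ℝ → ℝ) (u : Euc n → ℝ) : Prop :=
  ContinuousOn u Ω ∧
  ∀ x₀ ∈ Ω, ∀ φ : Euc n → ℝ, ContDiff ℝ 2 φ →
    IsLocalMaxOn (fun x => u x - φ x) Ω x₀ → -infLap φ x₀ - f x₀ (u x₀) ≤ 0

def IsViscSupersol {n : ℕ} (Ω : Set (Euc n)) (f : Euc n → ℝ → ℝ) (u : Euc n → ℝ) : Prop :=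
  ContinuousOn u Ω ∧
  ∀ x₀ ∈ Ω, ∀ φ : Euc n → ℝ, ContDiff ℝ 2 φ →
    IsLocalMinOn (fun x => u x - φ x) Ω x₀ → 0 ≤ -infLap φ x₀ - f x₀ (u x₀)

def IsDirichletSol {n : ℕ} (Ω : Set (Euc n)) (u : Euc n → ℝ) : Prop :=
  ContinuousOn u (closure Ω) ∧ (∀ x ∈ frontier Ω, u x = 0) ∧
  IsViscSubsol Ω (fun _ _ => 1) u ∧ IsViscSupersol Ω (fun _ _ => 1) u

def IntSphereCond {n : ℕ} (Ω : Set (Euc n)) : Prop :=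
  ∀ y ∈ frontier Ω, ∃ z : Euc n, ∃ R : ℝ, 0 < R ∧ ball z R ⊆ Ω ∧ y ∈ sphere z R

/-- `f` is locally Lipschitz continuous on `S`. -/
def LocLipschitzOn {n : ℕ} (f : Euc n → Euc n) (S : Set (Euc n)) : Prop :=
  ∀ x ∈ S, ∃ ε : ℝ, 0 < ε ∧ ∃ L : ℝ≥0, LipschitzOnWith L f (ball x ε ∩ S)

lemma hasGradQuad {n : ℕ} (b : ℝ) (c : Euc n) (y : Euc n) :
    HasGradientAt (fun z : Euc n => -b * ⟪z - c, z - c⟫) ((-(2*b)) • (y - c)) y := by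
  rw [hasGradientAt_iff_hasFDerivAt]
  have h1 : HasFDerivAt (fun z : Euc n => z - c) (ContinuousLinearMap.id ℝ (Euc n)) y :=
    (hasFDerivAt_id y).sub_const c
  have h2 := (h1.inner ℝ h1).const_mul (-b)
  refine h2.congr_fderiv ?_
  ext v
  simp only [ContinuousLinearMap.smul_apply, ContinuousLinearMap.coe_comp', Function.comp_apply,
    ContinuousLinearMap.prod_apply, ContinuousLinearMap.coe_id', id_eq, fderivInnerCLM_apply,
    InnerProductSpace.toDual_apply_apply, real_inner_smul_left, smul_eq_mul,
    real_inner_comm v (y - c)]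
  ring

lemma infLapQuad {n : ℕ} (b : ℝ) (c : Euc n) (x : Euc n) :
    infLap (fun z : Euc n => -b * ⟪z - c, z - c⟫) x = -(8 * b^3) * ‖x - c‖^2 := by
  have hg : gradient (fun z : Euc n => -b * ⟪z - c, z - c⟫) = fun y => (-(2*b)) • (y - c) :=
    funext fun y => (hasGradQuad b c y).gradient
  rw [infLap, hg]
  have h1 : HasFDerivAt (fun y : Euc n => (-(2*b)) • (y - c))
      ((-(2*b)) • ContinuousLinearMap.id ℝ (Euc n)) x :=
    ((hasFDerivAt_id x).sub_const c).const_smul (-(2*b))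
  rw [h1.fderiv]
  simp only [ContinuousLinearMap.smul_apply, ContinuousLinearMap.coe_id', id_eq,
    real_inner_smul_left, real_inner_smul_right, real_inner_self_eq_norm_sq, smul_eq_mul]
  ring

lemma stmt19_aux {n : ℕ} (Ω : Set (Euc n)) (hne : Ω.Nonempty) (hopen : IsOpen Ω)
    (hbdd : Bornology.IsBounded Ω)
    (u : Euc n → ℝ) (hcont : ContinuousOn u (closure Ω))
    (hsup : IsViscSupersol Ω (fun _ _ => 1) u)
    (hdiff : ∀ x ∈ Ω, DifferentiableAt ℝ u x)
    (K : Set (Euc n)) (hK : K = {y ∈ closure Ω | IsMaxOn u (closure Ω) y})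
    (A : Set (Euc n)) (hA : IsOpen A) (hKA : K ⊆ A) (hAΩ : A ⊆ Ω)
    (α : ℝ) (hα : 1 / 3 < α) :
    ¬ ∃ C : ℝ, 0 < C ∧ ∀ x ∈ A, ∀ y ∈ A,
      ‖gradient u x - gradient u y‖ ≤ C * ‖x - y‖ ^ α := by
  rintro ⟨C, hC, hCb⟩
  have hα0 : (0:ℝ) < α := lt_trans (by norm_num) hα
  -- a maximum point
  have hcpt : IsCompact (closure Ω) := hbdd.isCompact_closure
  obtain ⟨x₀, hx₀cl, hx₀max⟩ := hcpt.exists_isMaxOn hne.closure hcont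
  have hx₀A : x₀ ∈ A := hKA (by rw [hK]; exact ⟨hx₀cl, hx₀max⟩)
  have hx₀Ω : x₀ ∈ Ω := hAΩ hx₀A
  -- gradient vanishes at x₀
  have hclnhds : closure Ω ∈ 𝓝 x₀ := mem_of_superset (hopen.mem_nhds hx₀Ω) subset_closure
  have hlocmax : IsLocalMax u x₀ := eventually_of_mem hclnhds (fun y hy => hx₀max hy)
  have hgrad0 : gradient u x₀ = 0 := by rw [gradient, hlocmax.fderiv_eq_zero, map_zero]
  -- choose radius
  obtain ⟨r₀, hr₀, hball⟩ := Metric.isOpen_iff.1 hA x₀ hx₀A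
  set β : ℝ := 3*α - 1 with hβdef
  have hβ : 0 < β := by simp only [hβdef]; linarith
  set r : ℝ := min (r₀/2) ((64*C^3+1)⁻¹ ^ (1/β)) with hrdef
  have hCpos : (0:ℝ) < 64*C^3 := by positivity
  have hr : 0 < r := lt_min (by positivity) (Real.rpow_pos_of_pos (by positivity) _)
  have hrβ : 64*C^3 * r^β < 1 := by
    have h1 : r^β ≤ ((64*C^3+1)⁻¹ ^ (1/β))^β :=
      Real.rpow_le_rpow hr.le (min_le_right _ _) hβ.le
    have h2 : ((64*C^3+1:ℝ)⁻¹ ^ (1/β))^β = (64*C^3+1)⁻¹ := by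
      rw [← Real.rpow_mul (by positivity), one_div_mul_cancel hβ.ne', Real.rpow_one]
    rw [h2] at h1
    calc 64*C^3 * r^β ≤ 64*C^3 * (64*C^3+1)⁻¹ := mul_le_mul_of_nonneg_left h1 hCpos.le
      _ < 1 := by rw [← div_eq_mul_inv, div_lt_one (by positivity)]; linarith
  have hrA : closedBall x₀ r ⊆ A := fun y hy => hball (lt_of_le_of_lt
    (mem_closedBall.1 hy) (lt_of_le_of_lt (min_le_left _ _) (by linarith)))
  have hrΩ : closedBall x₀ r ⊆ Ω := hrA.trans hAΩ
  have hrcl : closedBall x₀ r ⊆ closure Ω := hrΩ.trans subset_closure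
  -- gradient bound on the ball
  have hgb : ∀ y ∈ closedBall x₀ r, ‖fderiv ℝ u y‖ ≤ C * r^α := by
    intro y hy
    have h1 : ‖gradient u y‖ ≤ C * ‖y - x₀‖^α := by
      have := hCb y (hrA hy) x₀ hx₀A
      rwa [hgrad0, sub_zero] at this
    have h2 : ‖fderiv ℝ u y‖ = ‖gradient u y‖ := by
      rw [gradient]; exact (LinearIsometryEquiv.norm_map _ _).symm
    have h3 : ‖y - x₀‖^α ≤ r^α :=
      Real.rpow_le_rpow (norm_nonneg _) (by rwa [← dist_eq_norm, ← mem_closedBall]) hα0.le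
    rw [h2]
    exact h1.trans (mul_le_mul_of_nonneg_left h3 hC.le)
  -- mean value bound
  have hmv : ∀ y ∈ closedBall x₀ r, ‖u y - u x₀‖ ≤ C * r^α * ‖y - x₀‖ :=
    fun y hy => (convex_closedBall x₀ r).norm_image_sub_le_of_norm_fderiv_le
      (fun z hz => hdiff z (hrΩ hz)) hgb (mem_closedBall_self hr.le) hy
  -- the test function
  set b : ℝ := 2 * C * r^(α-1) with hbdef
  have hb : 0 < b := by positivity
  set φ : Euc n → ℝ := fun z => -b * ⟪z - x₀, z - x₀⟫ with hφdef
  have hφc : ContDiff ℝ 2 φ := by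
    simp only [hφdef, real_inner_self_eq_norm_sq]
    exact contDiff_const.mul ((contDiff_id.sub contDiff_const).norm_sq ℝ)
  have hφval : ∀ z, φ z = -b * ‖z - x₀‖^2 := by
    intro z; simp only [hφdef, real_inner_self_eq_norm_sq]
  -- minimize u - φ on the closed ball
  have hfc : ContinuousOn (fun x => u x - φ x) (closedBall x₀ r) :=
    (hcont.mono hrcl).sub (hφc.continuous.continuousOn)
  obtain ⟨xs, hxs, hxsmin⟩ := (isCompact_closedBall x₀ r).exists_isMinOn
    ⟨x₀, mem_closedBall_self hr.le⟩ hfc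
  -- the key computation: b * r^2 = 2 * C * r^(α+1)
  have hkeyexp : r^(α-1) * r = r^α := by
    rw [Real.rpow_sub hr, Real.rpow_one]
    field_simp
  have hbr2 : b * r^2 = 2 * (C * r^α * r) := by
    rw [hbdef, sq, show (2:ℝ) * C * r^(α-1) * (r * r) = 2 * (C * (r^(α-1) * r) * r) by ring,
      hkeyexp]
  -- the minimizer is interior
  have hxsint : ‖xs - x₀‖ < r := by
    by_contra h
    push_neg at h
    have hle : ‖xs - x₀‖ ≤ r := by rwa [← dist_eq_norm, ← mem_closedBall]
    have heq : ‖xs - x₀‖ = r := le_antisymm hle h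
    have h1 : (fun x => u x - φ x) xs ≤ (fun x => u x - φ x) x₀ :=
      hxsmin (mem_closedBall_self hr.le)
    simp only [hφval, sub_self, norm_zero] at h1
    have h2 : u x₀ - u xs ≤ C * r^α * r := by
      have := hmv xs hxs
      rw [heq] at this
      have := abs_le.1 (this.trans_eq' (Real.norm_eq_abs _).symm)
      linarith [this.1]
    rw [heq] at h1
    have hpos : 0 < C * r^α * r := by positivity
    nlinarith
  -- local min on Ω
  have hxsΩ : xs ∈ Ω := hrΩ hxs
  have hlocmin : IsLocalMinOn (fun x => u x - φ x) Ω xs := by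
    have hmem : ball x₀ r ∈ 𝓝 xs := isOpen_ball.mem_nhds (by rwa [mem_ball, dist_eq_norm])
    exact (eventually_nhdsWithin_of_eventually_nhds
      (eventually_of_mem hmem (fun y hy => hxsmin (ball_subset_closedBall hy))))
  -- apply the supersolution property
  have hkey := hsup.2 xs hxsΩ φ hφc hlocmin
  rw [hφdef, infLapQuad] at hkey
  -- contradiction
  have hns : ‖xs - x₀‖^2 < r^2 := by
    apply pow_lt_pow_left₀ hxsint (norm_nonneg _)
    norm_num
  have h8 : 8 * b^3 * r^2 = 64 * C^3 * r^β := by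
    have key2 : (r^(α-1))^(3:ℕ) * r^2 = r^β := by
      rw [← Real.rpow_natCast (r^(α-1)) 3, ← Real.rpow_mul hr.le,
        ← Real.rpow_natCast r 2, ← Real.rpow_add hr]
      congr 1
      push_cast
      rw [hβdef]; ring
    rw [hbdef, show (8:ℝ) * (2 * C * r^(α-1))^3 * r^2 = 64 * C^3 * ((r^(α-1))^(3:ℕ) * r^2) by ring,
      key2]
  have hfin : 8 * b^3 * ‖xs - x₀‖^2 < 1 := by
    calc 8 * b^3 * ‖xs - x₀‖^2 ≤ 8 * b^3 * r^2 :=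
          mul_le_mul_of_nonneg_left hns.le (by positivity)
      _ = 64 * C^3 * r^β := h8
      _ < 1 := hrβ
  simp only [neg_neg, neg_mul] at hkey
  linarith [hkey, hfin]


theorem stmt19 {n : ℕ} (Ω : Set (Euc n)) (hne : Ω.Nonempty) (hopen : IsOpen Ω)
    (hbdd : Bornology.IsBounded Ω)
    (u : Euc n → ℝ) (hu : IsDirichletSol Ω u)
    (hdiff : ∀ x ∈ Ω, DifferentiableAt ℝ u x)
    (K : Set (Euc n)) (hK : K = {y ∈ closure Ω | IsMaxOn u (closure Ω) y})
    (A : Set (Euc n)) (hA : IsOpen A) (hKA : K ⊆ A) (hAΩ : A ⊆ Ω)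
    -- `u ∈ C^{1,1}(A ∖ K)`
    (hC11 : LocLipschitzOn (fun y => gradient u y) (A \ K))
    (α : ℝ) (hα : 1 / 3 < α) :
    ¬ ∃ C : ℝ, 0 < C ∧ ∀ x ∈ A, ∀ y ∈ A,
      ‖gradient u x - gradient u y‖ ≤ C * ‖x - y‖ ^ α := by
  exact stmt19_aux Ω hne hopen hbdd u hu.1 hu.2.2.2 hdiff K hK A hA hKA hAΩ α hα
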